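/- Let B be a bicategory, Γ = (f, g, η, ρ) a wide right Morita context from B to A and Λ = (p, q, γ, μ) a wide right Morita context from C to B. Define η ∗ γ : (f ≫ p) ≫ (q ≫ g) ⟶ 𝟙 A as the composite η ∘ (f ◁ λ_g) ∘ (f ◁ (γ ▷ g)) ∘ (f ◁ α⁻¹) ∘ α, and μ ∗ ρ : (q ≫ g) ≫ (f ≫ p) ⟶ 𝟙 C as μ ∘ (q ◁ λ_p) ∘ (q ◁ (ρ ▷ p)) ∘ (q ◁ α⁻¹) ∘ α. Then (f ≫ p, q ≫ g, η ∗ γ, μ ∗ ρ) is a wide right Morita context from C to A. -/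
import Mathlib


/-!
STATEMENT 4: The product of two wide right Morita contexts, with the 2-cells
η ∗ γ and μ ∗ ρ defined via associators, unitors and whiskering, is again a
wide right Morita context.
-/

open CategoryTheory Bicategory

/-- The two compatibility diagrams of a wide right Morita context (f, g, η, ρ). -/
def IsWRMC {B : Type*} [Bicategory B] {a b : B} (f : a ⟶ b) (g : b ⟶ a)
    (η : f ≫ g ⟶ 𝟙 a) (ρ : g ≫ f ⟶ 𝟙 b) : Prop :=
  ((ρ ▷ g) ≫ (λ_ g).hom = (α_ g f g).hom ≫ (g ◁ η) ≫ (ρ_ g).hom) ∧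
  ((α_ f g f).hom ≫ (f ◁ ρ) ≫ (ρ_ f).hom = (η ▷ f) ≫ (λ_ f).hom)

/-- The 2-cell `η ∗ γ : (f ≫ p) ≫ (q ≫ g) ⟶ 𝟙 a`, i.e. the composite
`η ∘ (f ◁ λ_g) ∘ (f ◁ (γ ▷ g)) ∘ (f ◁ α⁻¹) ∘ α`. -/
def star {B : Type*} [Bicategory B] {a b c : B} {f : a ⟶ b} {g : b ⟶ a}
    {p : b ⟶ c} {q : c ⟶ b} (η : f ≫ g ⟶ 𝟙 a) (γ : p ≫ q ⟶ 𝟙 b) :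
    (f ≫ p) ≫ (q ≫ g) ⟶ 𝟙 a :=
  (α_ f p (q ≫ g)).hom ≫ (f ◁ (α_ p q g).inv) ≫ (f ◁ (γ ▷ g)) ≫
    (f ◁ (λ_ g).hom) ≫ η

/-- The second compatibility diagram for the product of two wide right Morita
contexts, proved from the second diagrams of the two factors. -/
theorem wideMorita_key {B : Type*} [Bicategory B] {a b c : B}
    {f : a ⟶ b} {g : b ⟶ a} {p : b ⟶ c} {q : c ⟶ b}
    (η : f ≫ g ⟶ 𝟙 a) (ρ : g ≫ f ⟶ 𝟙 b)
    (γ : p ≫ q ⟶ 𝟙 b) (μ : q ≫ p ⟶ 𝟙 c)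
    (hΓ2 : (α_ f g f).hom ≫ (f ◁ ρ) ≫ (ρ_ f).hom = (η ▷ f) ≫ (λ_ f).hom)
    (hΛ2 : (α_ p q p).hom ≫ (p ◁ μ) ≫ (ρ_ p).hom = (γ ▷ p) ≫ (λ_ p).hom) :
    (α_ (f ≫ p) (q ≫ g) (f ≫ p)).hom ≫ ((f ≫ p) ◁ star μ ρ) ≫ (ρ_ (f ≫ p)).hom
      = (star η γ ▷ (f ≫ p)) ≫ (λ_ (f ≫ p)).hom := by
  have hΛ2' : (p ◁ μ) ≫ (ρ_ p).hom = (α_ p q p).inv ≫ (γ ▷ p) ≫ (λ_ p).hom := by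
    rw [← hΛ2, Iso.inv_hom_id_assoc]
  have hΓ2' : (f ◁ ρ) ≫ (ρ_ f).hom = (α_ f g f).inv ≫ (η ▷ f) ≫ (λ_ f).hom := by
    rw [← hΓ2, Iso.inv_hom_id_assoc]
  calc (α_ (f ≫ p) (q ≫ g) (f ≫ p)).hom ≫ ((f ≫ p) ◁ star μ ρ) ≫ (ρ_ (f ≫ p)).hom
      = 𝟙 _ ⊗≫ f ◁ ((p ≫ q) ◁ (ρ ▷ p)) ⊗≫ f ◁ ((p ◁ μ) ≫ (ρ_ p).hom) ⊗≫ 𝟙 (f ≫ p) := by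
        unfold _root_.star; bicategory
    _ = 𝟙 _ ⊗≫ f ◁ ((p ≫ q) ◁ (ρ ▷ p)) ⊗≫ f ◁ ((α_ p q p).inv ≫ (γ ▷ p) ≫ (λ_ p).hom) ⊗≫ 𝟙 (f ≫ p) := by
        rw [hΛ2']
    _ = 𝟙 _ ⊗≫ f ◁ (((p ≫ q) ◁ (ρ ▷ p)) ≫ (γ ▷ (𝟙 b ≫ p))) ⊗≫ 𝟙 (f ≫ p) := by
        bicategory
    _ = 𝟙 _ ⊗≫ f ◁ ((γ ▷ ((g ≫ f) ≫ p)) ≫ (𝟙 b ◁ (ρ ▷ p))) ⊗≫ 𝟙 (f ≫ p) := by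
        rw [whisker_exchange]
    _ = 𝟙 _ ⊗≫ f ◁ (γ ▷ ((g ≫ f) ≫ p)) ⊗≫ (((f ◁ ρ) ≫ (ρ_ f).hom) ▷ p) ⊗≫ 𝟙 (f ≫ p) := by
        bicategory
    _ = 𝟙 _ ⊗≫ f ◁ (γ ▷ ((g ≫ f) ≫ p)) ⊗≫ (((α_ f g f).inv ≫ (η ▷ f) ≫ (λ_ f).hom) ▷ p) ⊗≫ 𝟙 (f ≫ p) := by
        rw [hΓ2']
    _ = (star η γ ▷ (f ≫ p)) ≫ (λ_ (f ≫ p)).hom := by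
        unfold _root_.star; bicategory

theorem wideMorita_stmt4 {B : Type*} [Bicategory B] {a b c : B}
    {f : a ⟶ b} {g : b ⟶ a} {p : b ⟶ c} {q : c ⟶ b}
    (η : f ≫ g ⟶ 𝟙 a) (ρ : g ≫ f ⟶ 𝟙 b)
    (γ : p ≫ q ⟶ 𝟙 b) (μ : q ≫ p ⟶ 𝟙 c)
    (hΓ : IsWRMC f g η ρ) (hΛ : IsWRMC p q γ μ) :
    IsWRMC (f ≫ p) (q ≫ g) (star η γ) (star μ ρ) := by
  constructor
  · exact (wideMorita_key μ γ ρ η hΛ.1.symm hΓ.1.symm).symm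
  · exact wideMorita_key η ρ γ μ hΓ.2 hΛ.2
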